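/- (Lions interpolation inequality) Let A be a strictly positive self-adjoint operator on a Hilbert space and let α < β < γ be real numbers. Then there exists a constant L = L(α,β,γ) such that ‖A^β u‖ ≤ L ‖A^α u‖^{(γ−β)/(γ−α)} · ‖A^γ u‖^{(β−α)/(γ−α)} for every u ∈ D(A^γ). -/

import Mathlib

/-- **Lions interpolation inequality.** In the spectral representation of a
strictly positive self-adjoint operator `A` (multiplication by the spectral values
`μ : ℕ → ℝ`, `μ n ≥ m > 0`, on `ℓ²`), with `‖A^σ u‖² = ∑ μₙ^(2σ) ‖uₙ‖²`: for real numbers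
`α < β < γ` there is a constant `L = L(α,β,γ)` such that
`‖A^β u‖ ≤ L ‖A^α u‖^((γ-β)/(γ-α)) · ‖A^γ u‖^((β-α)/(γ-α))` for every `u ∈ D(A^γ)`. -/
theorem statement1 (μ : ℕ → ℝ) (m : ℝ) (hm : 0 < m) (hμ : ∀ n, m ≤ μ n)
    (α β γ : ℝ) (hαβ : α < β) (hβγ : β < γ) :
    ∃ L > 0, ∀ u : ℕ → ℂ,
      Summable (fun n => μ n ^ (2 * γ) * ‖u n‖ ^ 2) →
      Real.sqrt (∑' n, μ n ^ (2 * β) * ‖u n‖ ^ 2) ≤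
        L * Real.sqrt (∑' n, μ n ^ (2 * α) * ‖u n‖ ^ 2) ^ ((γ - β) / (γ - α)) *
          Real.sqrt (∑' n, μ n ^ (2 * γ) * ‖u n‖ ^ 2) ^ ((β - α) / (γ - α)) := by
  refine ⟨1, one_pos, fun u hsum => ?_⟩
  have hμpos : ∀ n, 0 < μ n := fun n => lt_of_lt_of_le hm (hμ n)
  set p : ℝ := (γ - α) / (γ - β) with hp
  set q : ℝ := (γ - α) / (β - α) with hq
  have hγα : (0:ℝ) < γ - α := by linarith
  have hγβ : (0:ℝ) < γ - β := by linarith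
  have hβα : (0:ℝ) < β - α := by linarith
  have hpq : p.HolderConjugate q := by
    rw [Real.holderConjugate_iff]
    constructor
    · rw [hp, lt_div_iff₀ hγβ]; linarith
    · rw [hp, hq]; field_simp; ring
  have hppos : 0 < p := div_pos hγα hγβ
  have hqpos : 0 < q := div_pos hγα hβα
  -- summability of the σ = α sum by comparison
  have key : ∀ σ, σ ≤ γ → Summable (fun n => μ n ^ (2 * σ) * ‖u n‖ ^ 2) := by
    intro σ hσ
    apply Summable.of_nonneg_of_le
      (fun n => by have := hμpos n; positivity)
      (fun n => ?_) (hsum.mul_left (m ^ (2 * σ - 2 * γ)))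
    have h1 : μ n ^ (2 * σ) = μ n ^ (2 * σ - 2 * γ) * μ n ^ (2 * γ) := by
      rw [← Real.rpow_add (hμpos n)]; ring_nf
    have h2 : μ n ^ (2 * σ - 2 * γ) ≤ m ^ (2 * σ - 2 * γ) :=
      Real.rpow_le_rpow_of_nonpos hm (hμ n) (by linarith)
    rw [h1, mul_assoc]
    exact mul_le_mul_of_nonneg_right h2 (by have := hμpos n; positivity)
  have hsα := key α (by linarith)
  -- Hölder
  set f : ℕ → ℝ := fun n => (μ n ^ (2 * α) * ‖u n‖ ^ 2) ^ (1 / p) with hf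
  set g : ℕ → ℝ := fun n => (μ n ^ (2 * γ) * ‖u n‖ ^ 2) ^ (1 / q) with hg
  have hfp : ∀ n, f n ^ p = μ n ^ (2 * α) * ‖u n‖ ^ 2 := by
    intro n
    have := hμpos n
    show ((μ n ^ (2 * α) * ‖u n‖ ^ 2) ^ (1 / p)) ^ p = _
    rw [← Real.rpow_mul (by positivity), one_div_mul_cancel hppos.ne', Real.rpow_one]
  have hgq : ∀ n, g n ^ q = μ n ^ (2 * γ) * ‖u n‖ ^ 2 := by
    intro n
    have := hμpos n
    show ((μ n ^ (2 * γ) * ‖u n‖ ^ 2) ^ (1 / q)) ^ q = _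
    rw [← Real.rpow_mul (by positivity), one_div_mul_cancel hqpos.ne', Real.rpow_one]
  have hfg : ∀ n, f n * g n = μ n ^ (2 * β) * ‖u n‖ ^ 2 := by
    intro n
    have hμn := hμpos n
    have hx : (0:ℝ) ≤ ‖u n‖ := norm_nonneg _
    have h2 : (‖u n‖:ℝ) ^ (2:ℕ) = ‖u n‖ ^ ((2:ℕ):ℝ) := (Real.rpow_natCast _ 2).symm
    show (μ n ^ (2 * α) * ‖u n‖ ^ 2) ^ (1 / p) * (μ n ^ (2 * γ) * ‖u n‖ ^ 2) ^ (1 / q)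
      = μ n ^ (2 * β) * ‖u n‖ ^ 2
    rw [h2, Real.mul_rpow (by positivity) (by positivity),
      Real.mul_rpow (by positivity) (by positivity),
      ← Real.rpow_mul hμn.le, ← Real.rpow_mul hx, ← Real.rpow_mul hμn.le, ← Real.rpow_mul hx,
      mul_mul_mul_comm, ← Real.rpow_add hμn,
      ← Real.rpow_add_of_nonneg hx (by positivity) (by positivity)]
    have e1 : 2 * α * (1 / p) + 2 * γ * (1 / q) = 2 * β := by
      rw [hp, hq]; field_simp; ring
    have e2 : ((2:ℕ):ℝ) * (1 / p) + ((2:ℕ):ℝ) * (1 / q) = ((2:ℕ):ℝ) := by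
      push_cast; rw [hp, hq]; field_simp; ring
    rw [e1, e2, ← h2]
  have hfpsum : Summable (fun n => f n ^ p) := by simpa only [hfp] using hsα
  have hgqsum : Summable (fun n => g n ^ q) := by simpa only [hgq] using hsum
  have hH := Real.inner_le_Lp_mul_Lq_tsum_of_nonneg hpq
    (fun n => by have := hμpos n; simp only [hf]; positivity)
    (fun n => by have := hμpos n; simp only [hg]; positivity) hfpsum hgqsum
  simp only [hfp, hgq, hfg] at hH
  -- take square roots
  have hαnn : (0:ℝ) ≤ ∑' n, μ n ^ (2 * α) * ‖u n‖ ^ 2 :=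
    tsum_nonneg fun n => by have := hμpos n; positivity
  have hγnn : (0:ℝ) ≤ ∑' n, μ n ^ (2 * γ) * ‖u n‖ ^ 2 :=
    tsum_nonneg fun n => by have := hμpos n; positivity
  have hs := Real.sqrt_le_sqrt hH
  rw [Real.sqrt_mul (by positivity)] at hs
  calc Real.sqrt (∑' n, μ n ^ (2 * β) * ‖u n‖ ^ 2)
      ≤ Real.sqrt ((∑' n, μ n ^ (2 * α) * ‖u n‖ ^ 2) ^ (1 / p)) *
        Real.sqrt ((∑' n, μ n ^ (2 * γ) * ‖u n‖ ^ 2) ^ (1 / q)) := hs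
    _ = 1 * Real.sqrt (∑' n, μ n ^ (2 * α) * ‖u n‖ ^ 2) ^ ((γ - β) / (γ - α)) *
          Real.sqrt (∑' n, μ n ^ (2 * γ) * ‖u n‖ ^ 2) ^ ((β - α) / (γ - α)) := by
        rw [one_mul, Real.sqrt_eq_rpow, Real.sqrt_eq_rpow, Real.sqrt_eq_rpow,
          Real.sqrt_eq_rpow, ← Real.rpow_mul hαnn, ← Real.rpow_mul hγnn,
          ← Real.rpow_mul hαnn, ← Real.rpow_mul hγnn]
        congr 2
        · rw [hp]; field_simp
        · rw [hq]; field_simp
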